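/- Let l > 0, λ > 0 and μ > l·λ be real numbers. For every Λ ≥ 0 with l·(Λ+λ) < μ, the second derivative of the function Λ ↦ S(μ, Λ) = l·μ / ((μ − l·Λ)·(μ − l·(Λ+λ))) at Λ is strictly positive. -/

import Mathlib

/-- The second derivative of `Λ ↦ l·μ / ((μ − l·Λ)·(μ − l·(Λ+λ)))` is strictly positive at
every `Λ ≥ 0` with `l·(Λ+λ) < μ`. -/
theorem sojourn_second_deriv_Lambda_pos (l lam μ : ℝ) (hl : 0 < l) (hlam : 0 < lam)
    (hμ : l * lam < μ) (Lam : ℝ) (hLam : 0 ≤ Lam) (hstab : l * (Lam + lam) < μ) :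
    0 < deriv (deriv (fun Lam : ℝ => l * μ / ((μ - l * Lam) * (μ - l * (Lam + lam))))) Lam := by
  set U : Set ℝ := {x : ℝ | l * (x + lam) < μ} with hUdef
  set F := fun x : ℝ => μ / lam * ((μ - l * (x + lam))⁻¹ - (μ - l * x)⁻¹) with hFdef
  set G := fun x : ℝ => μ / lam * (l / (μ - l * (x + lam)) ^ 2 - l / (μ - l * x) ^ 2) with hGdef
  have hU : IsOpen U := isOpen_lt (by fun_prop) continuous_const
  have hmem : Lam ∈ U := hstab
  have hnhds : U ∈ nhds Lam := hU.mem_nhds hmem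
  have hb : ∀ x ∈ U, 0 < μ - l * (x + lam) := by
    intro x hx; exact sub_pos.mpr hx
  have ha : ∀ x ∈ U, 0 < μ - l * x := by
    intro x hx
    have := hb x hx
    nlinarith [mul_pos hl hlam]
  -- derivative helpers
  have hderivb : ∀ x : ℝ, HasDerivAt (fun y : ℝ => μ - l * (y + lam)) (-l) x := by
    intro x
    simpa using (((hasDerivAt_id x).add_const lam).const_mul l).const_sub μ
  have hderiva : ∀ x : ℝ, HasDerivAt (fun y : ℝ => μ - l * y) (-l) x := by
    intro x
    simpa using ((hasDerivAt_id x).const_mul l).const_sub μ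
  -- f = F on a neighborhood of Lam
  have hfF : (fun Lam : ℝ => l * μ / ((μ - l * Lam) * (μ - l * (Lam + lam)))) =ᶠ[nhds Lam] F := by
    filter_upwards [hnhds] with x hx
    have hbx := (hb x hx).ne'
    have hax := (ha x hx).ne'
    simp only [hFdef]
    field_simp
    ring
  -- F has derivative G on U
  have hFG : ∀ x ∈ U, HasDerivAt F (G x) x := by
    intro x hx
    have hbx := (hb x hx).ne'
    have hax := (ha x hx).ne'
    have h1 : HasDerivAt (fun y : ℝ => (μ - l * (y + lam))⁻¹)
        (l / (μ - l * (x + lam)) ^ 2) x := by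
      have := (hderivb x).fun_inv hbx
      simpa [neg_div, div_eq_mul_inv] using this
    have h2 : HasDerivAt (fun y : ℝ => (μ - l * y)⁻¹) (l / (μ - l * x) ^ 2) x := by
      have := (hderiva x).fun_inv hax
      simpa [neg_div, div_eq_mul_inv] using this
    simpa [hFdef, hGdef] using ((h1.sub h2).const_mul (μ / lam))
  have hderivF : deriv F =ᶠ[nhds Lam] G := by
    filter_upwards [hnhds] with x hx
    exact (hFG x hx).deriv
  -- deriv (deriv f) Lam = deriv G Lam
  have hstep : deriv (deriv (fun Lam : ℝ =>
      l * μ / ((μ - l * Lam) * (μ - l * (Lam + lam))))) Lam = deriv G Lam := by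
    have h1 := hfF.deriv
    exact (h1.trans hderivF).deriv_eq
  rw [hstep]
  -- compute deriv G at Lam
  set b := μ - l * (Lam + lam) with hbdef
  set a := μ - l * Lam with hadef
  have hb0 : 0 < b := hb Lam hmem
  have ha0 : 0 < a := ha Lam hmem
  have hg1 : HasDerivAt (fun y : ℝ => l / (μ - l * (y + lam)) ^ 2) (2 * l ^ 2 / b ^ 3) Lam := by
    have hsq : HasDerivAt (fun y : ℝ => (μ - l * (y + lam)) ^ 2) (2 * b * (-l)) Lam := by
      simpa [hbdef] using ((hderivb Lam).fun_pow 2)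
    have hinv := hsq.fun_inv (by positivity : b ^ 2 ≠ 0)
    have := (hinv.const_mul l : HasDerivAt (fun y : ℝ => l * ((μ - l * (y + lam)) ^ 2)⁻¹) _ Lam)
    refine this.congr_deriv ?_
    rw [← hbdef]
    field_simp
  have hg2 : HasDerivAt (fun y : ℝ => l / (μ - l * y) ^ 2) (2 * l ^ 2 / a ^ 3) Lam := by
    have hsq : HasDerivAt (fun y : ℝ => (μ - l * y) ^ 2) (2 * a * (-l)) Lam := by
      simpa [hadef] using ((hderiva Lam).fun_pow 2)
    have hinv := hsq.fun_inv (by positivity : a ^ 2 ≠ 0)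
    have := (hinv.const_mul l : HasDerivAt (fun y : ℝ => l * ((μ - l * y) ^ 2)⁻¹) _ Lam)
    refine this.congr_deriv ?_
    rw [← hadef]
    field_simp
  have hG : HasDerivAt G (μ / lam * (2 * l ^ 2 / b ^ 3 - 2 * l ^ 2 / a ^ 3)) Lam := by
    simpa [hGdef] using ((hg1.sub hg2).const_mul (μ / lam))
  rw [hG.deriv]
  have hba : b < a := by
    simp only [hbdef, hadef]
    nlinarith [mul_pos hl hlam]
  have h1 : 2 * l ^ 2 / a ^ 3 < 2 * l ^ 2 / b ^ 3 := by
    apply div_lt_div_of_pos_left (by positivity) (by positivity)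
    exact pow_lt_pow_left₀ hba hb0.le (by norm_num)
  have hμ0 : 0 < μ := lt_trans (mul_pos hl hlam) hμ
  nlinarith [div_pos hμ0 hlam]
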